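/- Let A = diag(a,b,c) with a ≥ b ≥ c > 0 and let B be a 3×3 real antisymmetric matrix such that A + iB is positive semidefinite (as a Hermitian matrix). Then tr|iB| ≤ 2√(ab), and consequently (tr√A)² − (tr A + tr|iB|) ≥ 2(√(bc) + √(ca)) > 0, where tr|iB| is the sum of absolute values of eigenvalues of the Hermitian matrix iB. -/

import Mathlib

open ComplexOrder

lemma trace_eq_sum_eig {n : Type*} [Fintype n] [DecidableEq n] {M : Matrix n n ℂ}
    (hM : M.IsHermitian) : M.trace = ∑ i, (hM.eigenvalues i : ℂ) := by
  conv_lhs => rw [hM.spectral_theorem, Unitary.conjStarAlgAut_apply]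
  rw [Matrix.trace_mul_cycle]
  rw [show (star (hM.eigenvectorUnitary : Matrix n n ℂ)) * (hM.eigenvectorUnitary : Matrix n n ℂ)
    = 1 from (Matrix.mem_unitaryGroup_iff').mp (hM.eigenvectorUnitary).2]
  simp [Matrix.trace_diagonal]

lemma trace_sq_eq_sum_eig {n : Type*} [Fintype n] [DecidableEq n] {M : Matrix n n ℂ}
    (hM : M.IsHermitian) : (M * M).trace = ∑ i, ((hM.eigenvalues i : ℂ))^2 := by
  have hU : (star (hM.eigenvectorUnitary : Matrix n n ℂ)) * (hM.eigenvectorUnitary : Matrix n n ℂ)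
    = 1 := (Matrix.mem_unitaryGroup_iff').mp (hM.eigenvectorUnitary).2
  set U : Matrix n n ℂ := (hM.eigenvectorUnitary : Matrix n n ℂ)
  set D : Matrix n n ℂ := Matrix.diagonal (RCLike.ofReal ∘ hM.eigenvalues)
  have : M * M = U * (D * D) * star U := by
    conv_lhs => rw [hM.spectral_theorem, Unitary.conjStarAlgAut_apply]
    simp only [Matrix.mul_assoc]
    rw [← Matrix.mul_assoc (star U) U, hU, Matrix.one_mul]
  rw [this, Matrix.trace_mul_cycle, ← Matrix.mul_assoc, hU, Matrix.one_mul]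
  simp [D, Matrix.diagonal_mul_diagonal, Matrix.trace_diagonal, sq]

lemma key3 (x y z : ℝ) (h1 : x + y + z = 0) (h2 : x * y * z = 0) :
    (|x| + |y| + |z|)^2 = 2 * (x^2 + y^2 + z^2) := by
  rcases mul_eq_zero.mp h2 with h | h
  · rcases mul_eq_zero.mp h with h | h
    · have : z = -y := by rw [h] at h1; linarith
      subst this; rw [h]; simp [abs_neg]; nlinarith [sq_abs y]
    · have : z = -x := by rw [h] at h1; linarith
      subst this; rw [h]; simp [abs_neg]; nlinarith [sq_abs x]
  · have : y = -x := by rw [h] at h1; linarith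
    subst this; rw [h]; simp [abs_neg]; nlinarith [sq_abs x]

theorem stmt_18 (a b c : ℝ) (hab : b ≤ a) (hbc : c ≤ b) (hc : 0 < c)
    (B : Matrix (Fin 3) (Fin 3) ℝ) (hB : B.transpose = -B)
    (hH : (Complex.I • (B.map (fun x => (x : ℂ)))).IsHermitian)
    (hPSD : (((Matrix.diagonal ![a, b, c]).map (fun x => (x : ℂ)))
        + Complex.I • (B.map (fun x => (x : ℂ)))).PosSemidef) :
    (∑ i, |hH.eigenvalues i|) ≤ 2 * Real.sqrt (a * b) ∧
    2 * (Real.sqrt (b * c) + Real.sqrt (c * a))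
      ≤ (Real.sqrt a + Real.sqrt b + Real.sqrt c) ^ 2
        - ((a + b + c) + ∑ i, |hH.eigenvalues i|) ∧
    0 < 2 * (Real.sqrt (b * c) + Real.sqrt (c * a)) := by
  have hb : (0:ℝ) < b := lt_of_lt_of_le hc hbc
  have ha : (0:ℝ) < a := lt_of_lt_of_le hb hab
  have hE : ∀ i j, B j i = - B i j := fun i j => by
    have := congrFun (congrFun hB i) j
    simpa [Matrix.transpose_apply, Matrix.neg_apply] using this
  set p := B 0 1 with hp
  set q := B 0 2 with hq
  set r := B 1 2 with hr
  have h00 : B 0 0 = 0 := by have := hE 0 0; linarith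
  have h11 : B 1 1 = 0 := by have := hE 1 1; linarith
  have h22 : B 2 2 = 0 := by have := hE 2 2; linarith
  have h10 : B 1 0 = -p := hE 0 1
  have h20 : B 2 0 = -q := hE 0 2
  have h21 : B 2 1 = -r := hE 1 2
  set M := Complex.I • (B.map (fun x => (x : ℂ))) with hM
  set lam := hH.eigenvalues with hlam
  -- sum of eigenvalues = 0
  have h1 : lam 0 + lam 1 + lam 2 = 0 := by
    have ht := trace_eq_sum_eig hH
    have : M.trace = 0 := by
      simp [hM, Matrix.trace, Matrix.diag, Matrix.smul_apply, Matrix.map_apply,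
        Fin.sum_univ_three, h00, h11, h22]
    rw [this] at ht
    have : ((lam 0 + lam 1 + lam 2 : ℝ) : ℂ) = 0 := by
      push_cast
      rw [← Fin.sum_univ_three (fun i => (lam i : ℂ))]
      exact ht.symm
    exact_mod_cast this
  -- product of eigenvalues = 0
  have h2 : lam 0 * lam 1 * lam 2 = 0 := by
    have hd := hH.det_eq_prod_eigenvalues
    have : M.det = 0 := by
      rw [Matrix.det_fin_three]
      simp [hM, Matrix.smul_apply, Matrix.map_apply, h00, h11, h22, h10, h20, h21]
      ring
    rw [this] at hd
    have : ((lam 0 * lam 1 * lam 2 : ℝ) : ℂ) = 0 := by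
      push_cast
      rw [show ((lam 0 : ℂ)) * lam 1 * lam 2 = ∏ i, (lam i : ℂ) by
        rw [Fin.prod_univ_three]]
      exact hd.symm
    exact_mod_cast this
  -- sum of squares = 2 (p² + q² + r²)
  have h3 : (lam 0)^2 + (lam 1)^2 + (lam 2)^2 = 2 * (p^2 + q^2 + r^2) := by
    have ht := trace_sq_eq_sum_eig hH
    have : (M * M).trace = ((2 * (p^2 + q^2 + r^2) : ℝ) : ℂ) := by
      simp [hM, Matrix.trace, Matrix.diag, Matrix.mul_apply, Matrix.smul_apply,
        Matrix.map_apply, Fin.sum_univ_three, h00, h11, h22, h10, h20, h21, ← hp, ← hq, ← hr]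
      linear_combination (-(2*((p:ℂ)^2+(q:ℂ)^2+(r:ℂ)^2))) * Complex.I_sq
    rw [this] at ht
    have : ((2 * (p^2 + q^2 + r^2) : ℝ) : ℂ) = (((lam 0)^2 + (lam 1)^2 + (lam 2)^2 : ℝ) : ℂ) := by
      rw [ht]
      push_cast
      rw [Fin.sum_univ_three]
    exact (Complex.ofReal_inj.mp this).symm
  -- determinant nonnegativity of A + iB
  have h4 : p^2 + q^2 + r^2 ≤ a * b := by
    have hdet := hPSD.1.det_eq_prod_eigenvalues
    have hcomp : (((Matrix.diagonal ![a, b, c]).map (fun x => (x : ℂ))) + M).det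
        = ((a*b*c - a*r^2 - b*q^2 - c*p^2 : ℝ) : ℂ) := by
      rw [Matrix.det_fin_three]
      simp [hM, Matrix.add_apply, Matrix.smul_apply, Matrix.map_apply, Matrix.diagonal_apply,
        h00, h11, h22, h10, h20, h21, ← hp, ← hq, ← hr]
      linear_combination ((a:ℂ)*(r:ℂ)^2 + (b:ℂ)*(q:ℂ)^2 + (c:ℂ)*(p:ℂ)^2) * Complex.I_sq
    rw [hcomp] at hdet
    have hnn : (0:ℝ) ≤ ∏ i, hPSD.1.eigenvalues i :=
      Finset.prod_nonneg (fun i _ => hPSD.eigenvalues_nonneg i)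
    have heq : a*b*c - a*r^2 - b*q^2 - c*p^2 = ∏ i, hPSD.1.eigenvalues i := by
      have : ((a*b*c - a*r^2 - b*q^2 - c*p^2 : ℝ) : ℂ)
          = ((∏ i, hPSD.1.eigenvalues i : ℝ) : ℂ) := by
        rw [hdet]; push_cast; rfl
      exact_mod_cast this
    have hdet' : 0 ≤ a*b*c - a*r^2 - b*q^2 - c*p^2 := heq ▸ hnn
    nlinarith [sq_nonneg p, sq_nonneg q, sq_nonneg r,
      mul_nonneg (sub_nonneg.mpr hbc) (sq_nonneg q),
      mul_nonneg (sub_nonneg.mpr (hbc.trans hab)) (sq_nonneg r)]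
  -- part 1
  have hab0 : (0:ℝ) ≤ a * b := le_of_lt (mul_pos ha hb)
  have part1 : (∑ i, |lam i|) ≤ 2 * Real.sqrt (a * b) := by
    rw [Fin.sum_univ_three]
    have hsq : (|lam 0| + |lam 1| + |lam 2|)^2 ≤ (2 * Real.sqrt (a * b))^2 := by
      rw [key3 _ _ _ h1 h2, h3]
      have : (2 * Real.sqrt (a*b))^2 = 4 * (a*b) := by
        rw [mul_pow, Real.sq_sqrt hab0]; ring
      rw [this]; linarith
    have hnn2 : (0:ℝ) ≤ 2 * Real.sqrt (a*b) := by positivity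
    exact le_of_pow_le_pow_left₀ two_ne_zero hnn2 hsq
  refine ⟨part1, ?_, ?_⟩
  · have hexp : (Real.sqrt a + Real.sqrt b + Real.sqrt c)^2
        = a + b + c + 2 * (Real.sqrt (a*b) + Real.sqrt (b*c) + Real.sqrt (c*a)) := by
      rw [show Real.sqrt (a*b) = Real.sqrt a * Real.sqrt b from Real.sqrt_mul ha.le b,
        show Real.sqrt (b*c) = Real.sqrt b * Real.sqrt c from Real.sqrt_mul hb.le c,
        show Real.sqrt (c*a) = Real.sqrt c * Real.sqrt a from Real.sqrt_mul hc.le a]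
      have hA := Real.sq_sqrt ha.le
      have hB' := Real.sq_sqrt hb.le
      have hC := Real.sq_sqrt hc.le
      have hr2 : (Real.sqrt a + Real.sqrt b + Real.sqrt c)^2
          = (Real.sqrt a)^2 + (Real.sqrt b)^2 + (Real.sqrt c)^2
            + 2 * (Real.sqrt a * Real.sqrt b + Real.sqrt b * Real.sqrt c
              + Real.sqrt c * Real.sqrt a) := by ring
      rw [hr2, hA, hB', hC]
    rw [hexp]
    linarith
  · positivity
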